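/- arXiv:2509.02012 — 4 statements merged into one kernel-verified Lean document; each statement's English description precedes it below -/
import Mathlib

section
/- Let α be a nonempty finite type, let μ be a probability mass function on α, and let the product measure μ^⊗k on α^k model k independent, identically distributed draws X_1,…,X_k from μ. Let S ⊆ α be a nonempty finite set of N 'coupons' such that μ(a) > 0 for every a ∈ S. Then the probability that at least one coupon of S does not appear among the k draws equals ∑_{J ⊆ S, J ≠ ∅} (−1)^{|J|+1} (1 − μ(J))^k, where μ(J) = ∑_{a∈J} μ(a). (Exact tail distribution of the coupon collector's problem, Theorem 1.) -/
open MeasureTheory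

private lemma measure_finset_eq_sum {α : Type*} [Fintype α] [DecidableEq α]
    [MeasurableSpace α] [MeasurableSingletonClass α]
    (μ : PMF α) (k : ℕ) (T : Finset (Fin k → α)) :
    (Measure.pi fun _ : Fin k => μ.toMeasure) ↑T = ∑ x ∈ T, ∏ j, μ (x j) := by
  have h1 : (↑T : Set (Fin k → α)) = ⋃ x ∈ T, {x} := by
    ext x; simp
  rw [h1, measure_biUnion_finset]
  · refine Finset.sum_congr rfl fun x _ => ?_
    have : ({x} : Set (Fin k → α)) = Set.pi Set.univ (fun j => {x j}) := by
      rw [Set.univ_pi_singleton]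
    rw [this, Measure.pi_pi]
    refine Finset.prod_congr rfl fun j _ => ?_
    exact μ.toMeasure_apply_singleton _ (measurableSet_singleton _)
  · intro x _ y _ hxy
    simp [Set.disjoint_singleton, hxy]
  · intro x _
    exact measurableSet_singleton x

/-- Exact tail distribution of the coupon collector's problem (Theorem 1):
the probability (under k i.i.d. draws from `μ`) that at least one coupon of `S`
does not appear among the k draws equals the inclusion–exclusion sum
`∑_{∅ ≠ J ⊆ S} (−1)^{|J|+1} (1 − μ(J))^k`. -/
theorem coupon_collector_tail_dist
    {α : Type*} [Fintype α] [Nonempty α] [DecidableEq α]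
    [MeasurableSpace α] [MeasurableSingletonClass α]
    (μ : PMF α) (k : ℕ) (S : Finset α)
    (hS : S.Nonempty) (hpos : ∀ a ∈ S, 0 < μ a) :
    ((Measure.pi fun _ : Fin k => μ.toMeasure)
        {x : Fin k → α | ∃ a ∈ S, ∀ j : Fin k, x j ≠ a}).toReal
      = ∑ J ∈ S.powerset.filter (fun J => J ≠ ∅),
          (-1 : ℝ) ^ (J.card + 1) * (1 - ∑ a ∈ J, (μ a).toReal) ^ k := by
  classical
  set w : (Fin k → α) → ℝ := fun x => ∏ j, (μ (x j)).toReal with hw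
  set B : α → Finset (Fin k → α) :=
    fun a => Finset.univ.filter (fun x => ∀ j : Fin k, x j ≠ a) with hB
  have hset : {x : Fin k → α | ∃ a ∈ S, ∀ j : Fin k, x j ≠ a}
      = ↑(S.biUnion B) := by
    ext x
    simp [hB]
  have hmeas : ∀ T : Finset (Fin k → α),
      ((Measure.pi fun _ : Fin k => μ.toMeasure) ↑T).toReal = ∑ x ∈ T, w x := by
    intro T
    rw [measure_finset_eq_sum μ k T,
      ENNReal.toReal_sum (fun x _ => ENNReal.prod_ne_top fun j _ => μ.apply_ne_top _)]
    exact Finset.sum_congr rfl fun x _ => ENNReal.toReal_prod _ _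
  rw [hset, hmeas]
  rw [Finset.inclusion_exclusion_sum_biUnion (G := ℝ) S B w]
  have hJ : ∀ (J : Finset α) (hJ' : J.Nonempty),
      ∑ x ∈ J.inf' hJ' B, w x = (1 - ∑ a ∈ J, (μ a).toReal) ^ k := by
    intro J hJ'
    have hInf : J.inf' hJ' B = Fintype.piFinset (fun _ : Fin k => Jᶜ) := by
      ext x
      simp only [Finset.mem_inf', hB, Finset.mem_filter, Finset.mem_univ, true_and,
        Fintype.mem_piFinset, Finset.mem_compl]
      constructor
      · intro h j hj
        exact h _ hj j rfl
      · intro h a ha j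
        exact fun hxa => h j (hxa ▸ ha)
    have htot : ∑ a : α, (μ a).toReal = 1 := by
      have h2 := μ.tsum_coe
      rw [tsum_fintype] at h2
      have h3 : (∑ a : α, μ a).toReal = (1 : ENNReal).toReal := by rw [h2]
      rwa [ENNReal.toReal_sum (fun a _ => μ.apply_ne_top a), ENNReal.toReal_one] at h3
    have hcompl : ∑ b ∈ Jᶜ, (μ b).toReal = 1 - ∑ a ∈ J, (μ a).toReal := by
      rw [eq_sub_iff_add_eq, Finset.sum_compl_add_sum, htot]
    rw [hInf, ← hcompl, ← Finset.prod_univ_sum (fun _ : Fin k => Jᶜ)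
      (fun _ b => (μ b).toReal), Finset.prod_const, Finset.card_univ, Fintype.card_fin]
  have hfilter : S.powerset.filter (fun J => J ≠ ∅) = S.powerset.filter (·.Nonempty) := by
    simp [Finset.nonempty_iff_ne_empty]
  rw [hfilter, ← Finset.sum_coe_sort (S.powerset.filter (·.Nonempty))
    (fun J => (-1 : ℝ) ^ (J.card + 1) * (1 - ∑ a ∈ J, (μ a).toReal) ^ k)]
  refine Finset.sum_congr rfl fun t _ => ?_
  rw [hJ t.1 (Finset.mem_filter.1 t.2).2, zsmul_eq_mul]
  push_cast
  ring
end

section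
/- Let α be a nonempty finite type, let μ be a probability mass function on α, and model k i.i.d. draws from μ by the product measure on α^k. Let S ⊆ α be a nonempty finite set of coupons with μ(a) > 0 for every a ∈ S. Then the probability that every coupon of S appears among the k draws equals ∑_{J ⊆ S} (−1)^{|J|} (1 − μ(J))^k, where μ(J) = ∑_{a∈J} μ(a) and the empty set contributes the term 1. -/
open MeasureTheory Finset

private lemma pi_meas_toReal {α : Type*} [Fintype α] [MeasurableSpace α]
    [MeasurableSingletonClass α] (μ : PMF α) (k : ℕ) (s : Set (Fin k → α))
    [DecidablePred (· ∈ s)] :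
    ((Measure.pi fun _ : Fin k => μ.toMeasure) s).toReal
      = ∑ x ∈ Finset.univ.filter (· ∈ s), ∏ j, (μ (x j)).toReal := by
  have hs : s = ⋃ x ∈ Finset.univ.filter (· ∈ s), ({x} : Set (Fin k → α)) := by
    ext x; simp
  rw [show (Measure.pi fun _ : Fin k => μ.toMeasure) s
        = (Measure.pi fun _ : Fin k => μ.toMeasure)
            (⋃ x ∈ Finset.univ.filter (· ∈ s), ({x} : Set (Fin k → α)))
      from congrArg _ hs, measure_biUnion_finset]
  · rw [ENNReal.toReal_sum]
    · refine Finset.sum_congr rfl fun x _ => ?_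
      rw [← Set.univ_pi_singleton x, Measure.pi_pi, ENNReal.toReal_prod]
      refine Finset.prod_congr rfl fun j _ => ?_
      rw [μ.toMeasure_apply_singleton _ (measurableSet_singleton _)]
    · intro x _
      rw [← Set.univ_pi_singleton x, Measure.pi_pi]
      refine ENNReal.prod_ne_top fun j _ => ?_
      rw [μ.toMeasure_apply_singleton _ (measurableSet_singleton _)]
      exact μ.apply_ne_top _
  · intro x _ y _ hxy
    simp [Set.disjoint_singleton, hxy]
  · intro x _; exact measurableSet_singleton x

private lemma sum_powerset_neg_one_pow_card_real {β : Type*} [DecidableEq β]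
    (M : Finset β) :
    (∑ J ∈ M.powerset, (-1 : ℝ) ^ J.card) = if M = ∅ then 1 else 0 := by
  have h := Finset.sum_powerset_neg_one_pow_card (x := M)
  calc (∑ J ∈ M.powerset, (-1 : ℝ) ^ J.card)
      = ((∑ J ∈ M.powerset, (-1 : ℤ) ^ J.card : ℤ) : ℝ) := by push_cast; rfl
    _ = _ := by rw [h]; split_ifs <;> simp

/-- Inclusion–exclusion formula for the collection event: the probability
(under k i.i.d. draws from `μ`) that every coupon of `S` appears among the
k draws equals `∑_{J ⊆ S} (−1)^{|J|} (1 − μ(J))^k`. -/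
theorem coupon_collector_collection_dist
    {α : Type*} [Fintype α] [Nonempty α] [DecidableEq α]
    [MeasurableSpace α] [MeasurableSingletonClass α]
    (μ : PMF α) (k : ℕ) (S : Finset α)
    (hS : S.Nonempty) (hpos : ∀ a ∈ S, 0 < μ a) :
    ((Measure.pi fun _ : Fin k => μ.toMeasure)
        {x : Fin k → α | ∀ a ∈ S, ∃ j : Fin k, x j = a}).toReal
      = ∑ J ∈ S.powerset,
          (-1 : ℝ) ^ J.card * (1 - ∑ a ∈ J, (μ a).toReal) ^ k := by
  classical
  set p : α → ℝ := fun a => (μ a).toReal with hp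
  have hsum1 : ∑ a, p a = 1 := by
    have h1 := μ.tsum_coe
    rw [tsum_fintype] at h1
    have : ∑ a, p a = (∑ a, μ a).toReal :=
      (ENNReal.toReal_sum fun a _ => μ.apply_ne_top a).symm
    rw [this, h1, ENNReal.toReal_one]
  -- rewrite each RHS term as a sum over draws avoiding J
  have hterm : ∀ J ∈ S.powerset,
      (-1 : ℝ) ^ J.card * (1 - ∑ a ∈ J, p a) ^ k
        = ∑ x ∈ (Finset.univ : Finset (Fin k → α)), (if ∀ j, x j ∉ J then (-1 : ℝ) ^ J.card else 0)
            * ∏ j, p (x j) := by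
    intro J _
    have hcompl : 1 - ∑ a ∈ J, p a = ∑ a ∈ Jᶜ, p a := by
      have := Finset.sum_add_sum_compl J p
      rw [hsum1] at this; linarith
    have hpow : (∑ a ∈ Jᶜ, p a) ^ k
        = ∑ x ∈ Fintype.piFinset (fun _ : Fin k => (Jᶜ : Finset α)),
            ∏ j, p (x j) := by
      rw [← Finset.prod_univ_sum]
      simp [Finset.prod_const]
    have hset : Fintype.piFinset (fun _ : Fin k => (Jᶜ : Finset α))
        = Finset.univ.filter (fun x : Fin k → α => ∀ j, x j ∉ J) := by
      ext x; simp [Fintype.mem_piFinset]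
    rw [hcompl, hpow, hset, Finset.sum_filter, Finset.mul_sum]
    refine Finset.sum_congr rfl fun x _ => ?_
    by_cases hx : ∀ j, x j ∉ J <;> simp [hx]
  rw [Finset.sum_congr rfl hterm, Finset.sum_comm]
  -- compute LHS as a sum over covering draws
  rw [pi_meas_toReal]
  rw [Finset.sum_filter]
  refine Finset.sum_congr rfl fun x _ => ?_
  -- inner sum over J
  have hswap : ∑ J ∈ S.powerset,
      (if ∀ j, x j ∉ J then (-1 : ℝ) ^ J.card else 0) * ∏ j, p (x j)
      = (∑ J ∈ S.powerset, if ∀ j, x j ∉ J then (-1 : ℝ) ^ J.card else 0)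
          * ∏ j, p (x j) := by
    rw [Finset.sum_mul]
  rw [hswap]
  set M : Finset α := S.filter (fun a => ∀ j, x j ≠ a) with hM
  have hfilter : S.powerset.filter (fun J => ∀ j, x j ∉ J) = M.powerset := by
    ext J
    simp only [Finset.mem_filter, Finset.mem_powerset, hM]
    constructor
    · rintro ⟨hJS, hav⟩ a haJ
      exact Finset.mem_filter.2 ⟨hJS haJ, fun j hj => hav j (hj ▸ haJ)⟩
    · intro hJM
      refine ⟨fun a haJ => (Finset.mem_filter.1 (hJM haJ)).1, fun j hj => ?_⟩
      exact (Finset.mem_filter.1 (hJM hj)).2 j rfl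
  rw [← Finset.sum_filter, hfilter, sum_powerset_neg_one_pow_card_real]
  have hMempty : M = ∅ ↔ (x ∈ {x : Fin k → α | ∀ a ∈ S, ∃ j : Fin k, x j = a}) := by
    simp only [hM, Finset.filter_eq_empty_iff, Set.mem_setOf_eq]
    push_neg
    rfl
  by_cases hcov : x ∈ {x : Fin k → α | ∀ a ∈ S, ∃ j : Fin k, x j = a}
  · simp [hMempty.2 hcov, hcov, hp]
  · have : ¬ M = ∅ := fun h => hcov (hMempty.1 h)
    simp [this, hcov]
end

section
/- Let α be a nonempty finite type, let μ be a probability mass function on α, and model k i.i.d. draws from μ by the product measure on α^k. Let S ⊆ α be a nonempty finite set of coupons with μ(a) > 0 for every a ∈ S, let ε > 0, and suppose k ∈ ℕ satisfies ∑_{J ⊆ S, J ≠ ∅} (−1)^{|J|+1} (1 − μ(J))^k < ε, where μ(J) = ∑_{a∈J} μ(a). Then the probability that every coupon of S appears among the k draws is strictly greater than 1 − ε. -/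
open MeasureTheory Finset

section aux
variable {α : Type*} [Fintype α] [DecidableEq α]
    [MeasurableSpace α] [MeasurableSingletonClass α]

lemma pi_measure_toReal_eq_sum (μ : PMF α) (k : ℕ) (T : Set (Fin k → α))
    [DecidablePred (· ∈ T)] :
    ((Measure.pi fun _ : Fin k => μ.toMeasure) T).toReal
      = ∑ x ∈ Finset.univ.filter (· ∈ T), ∏ j, (μ (x j)).toReal := by
  classical
  have hsingle : ∀ x : Fin k → α,
      (Measure.pi fun _ : Fin k => μ.toMeasure) {x} = ∏ j, μ (x j) := by
    intro x
    rw [← Set.univ_pi_singleton x, Measure.pi_pi]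
    simp [PMF.toMeasure_apply_singleton _ _ (measurableSet_singleton _)]
  have hT : T = ⋃ x ∈ Finset.univ.filter (· ∈ T), ({x} : Set (Fin k → α)) := by
    ext y; simp
  have key : (Measure.pi fun _ : Fin k => μ.toMeasure) T
      = ∑ x ∈ Finset.univ.filter (· ∈ T), ∏ j, μ (x j) := by
    conv_lhs => rw [hT]
    rw [measure_biUnion_finset]
    · exact Finset.sum_congr rfl fun x _ => hsingle x
    · intro x _ y _ hxy
      simp [Set.disjoint_singleton, hxy]
    · intro x _
      exact measurableSet_singleton x
  rw [key, ENNReal.toReal_sum]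
  · exact Finset.sum_congr rfl fun x _ => ENNReal.toReal_prod _ _
  · intro x _
    exact ENNReal.prod_ne_top fun j _ => PMF.apply_ne_top μ (x j)
end aux

/-- If `k` satisfies `∑_{∅ ≠ J ⊆ S} (−1)^{|J|+1} (1 − μ(J))^k < ε`, then the
probability (under k i.i.d. draws from `μ`) that every coupon of `S` appears
among the k draws is strictly greater than `1 − ε`. -/
theorem coupon_collector_coverage
    {α : Type*} [Fintype α] [Nonempty α] [DecidableEq α]
    [MeasurableSpace α] [MeasurableSingletonClass α]
    (μ : PMF α) (k : ℕ) (S : Finset α)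
    (hS : S.Nonempty) (hpos : ∀ a ∈ S, 0 < μ a)
    (ε : ℝ) (hε : 0 < ε)
    (hk : ∑ J ∈ S.powerset.filter (fun J => J ≠ ∅),
            (-1 : ℝ) ^ (J.card + 1) * (1 - ∑ a ∈ J, (μ a).toReal) ^ k < ε) :
    1 - ε <
      ((Measure.pi fun _ : Fin k => μ.toMeasure)
        {x : Fin k → α | ∀ a ∈ S, ∃ j : Fin k, x j = a}).toReal := by
  classical
  set W : (Fin k → α) → ℝ := fun x => ∏ j, (μ (x j)).toReal with hW
  -- total mass one
  have hμ1 : ∑ a : α, (μ a).toReal = 1 := by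
    have h := μ.tsum_coe
    rw [tsum_fintype] at h
    calc ∑ a : α, (μ a).toReal = (∑ a : α, μ a).toReal :=
          (ENNReal.toReal_sum (fun a _ => PMF.apply_ne_top μ a)).symm
      _ = 1 := by rw [h]; rfl
  have htot : ∑ x : Fin k → α, W x = 1 := by
    have h2 : (∏ _j : Fin k, ∑ a : α, (μ a).toReal)
        = ∑ x ∈ Fintype.piFinset (fun _ : Fin k => (Finset.univ : Finset α)),
            ∏ j, (μ (x j)).toReal :=
      Finset.prod_univ_sum _ _
    simp only [Fintype.piFinset_univ, hμ1, Finset.prod_const, one_pow] at h2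
    simp only [hW]
    exact h2.symm
  -- the events as finsets
  set A : α → Finset (Fin k → α) := fun a => Finset.univ.filter (fun x => ∀ j, x j ≠ a) with hA
  have hinf : ∀ (t : Finset α) (ht : t.Nonempty),
      t.inf' ht A = Finset.univ.filter (fun x : Fin k → α => ∀ j, x j ∉ t) := by
    intro t ht
    ext x
    rw [Finset.inf'_eq_inf, Finset.mem_inf]  -- guess
    simp only [hA, Finset.mem_filter, Finset.mem_univ, true_and]
    constructor
    · intro h j hj; exact h _ hj j rfl
    · intro h a ha j hja; exact h j (hja ▸ ha)
  have hcyl : ∀ t : Finset α,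
      ∑ x ∈ Finset.univ.filter (fun x : Fin k → α => ∀ j, x j ∉ t), W x
        = (1 - ∑ a ∈ t, (μ a).toReal) ^ k := by
    intro t
    have hset : Finset.univ.filter (fun x : Fin k → α => ∀ j, x j ∉ t)
        = Fintype.piFinset (fun _ : Fin k => tᶜ) := by
      ext x; simp
    have hcompl : ∑ a ∈ tᶜ, (μ a).toReal = 1 - ∑ a ∈ t, (μ a).toReal := by
      have h3 := Finset.sum_compl_add_sum t (fun a => (μ a).toReal)
      linarith [h3, hμ1]
    rw [hset]
    calc ∑ x ∈ Fintype.piFinset (fun _ : Fin k => tᶜ), W x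
        = ∑ x ∈ Fintype.piFinset (fun _ : Fin k => tᶜ), ∏ j, (μ (x j)).toReal := by
          simp only [hW]
      _ = ∏ _j : Fin k, ∑ a ∈ tᶜ, (μ a).toReal :=
          (Finset.prod_univ_sum (fun _ : Fin k => tᶜ) (fun _ a => (μ a).toReal)).symm
      _ = (1 - ∑ a ∈ t, (μ a).toReal) ^ k := by
          simp [hcompl]
  -- inclusion-exclusion
  have hIE := Finset.inclusion_exclusion_sum_biUnion (G := ℝ) S A W
  have hbi : S.biUnion A = Finset.univ.filter
      (fun x : Fin k → α => ¬ ∀ a ∈ S, ∃ j, x j = a) := by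
    ext x
    simp only [Finset.mem_biUnion, hA, Finset.mem_filter, Finset.mem_univ, true_and]
    push_neg
    constructor
    · rintro ⟨a, ha, h⟩; exact ⟨a, ha, fun j => h j⟩
    · rintro ⟨a, ha, h⟩; exact ⟨a, ha, fun j => h j⟩
  have hRHS : ∑ t : S.powerset.filter (·.Nonempty),
      (-1) ^ (t.1.card + 1) • ∑ a ∈ t.1.inf' (Finset.mem_filter.1 t.2).2 A, W a
      = ∑ J ∈ S.powerset.filter (fun J => J ≠ ∅),
          (-1 : ℝ) ^ (J.card + 1) * (1 - ∑ a ∈ J, (μ a).toReal) ^ k := by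
    have hfilter : S.powerset.filter (·.Nonempty) = S.powerset.filter (fun J => J ≠ ∅) := by
      apply Finset.filter_congr; intro J _; simp [Finset.nonempty_iff_ne_empty]
    calc ∑ t : S.powerset.filter (·.Nonempty),
        (-1) ^ (t.1.card + 1) • ∑ a ∈ t.1.inf' (Finset.mem_filter.1 t.2).2 A, W a
        = ∑ t : S.powerset.filter (·.Nonempty),
            (-1 : ℝ) ^ (t.1.card + 1) * (1 - ∑ a ∈ t.1, (μ a).toReal) ^ k := by
          apply Finset.sum_congr rfl
          intro t _
          rw [hinf _ (Finset.mem_filter.1 t.2).2, hcyl, zsmul_eq_mul]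
          push_cast
          ring
      _ = ∑ J ∈ S.powerset.filter (fun J => J ≠ ∅),
            (-1 : ℝ) ^ (J.card + 1) * (1 - ∑ a ∈ J, (μ a).toReal) ^ k := by
          rw [← hfilter]
          exact Finset.sum_coe_sort _
            (fun J => (-1 : ℝ) ^ (J.card + 1) * (1 - ∑ a ∈ J, (μ a).toReal) ^ k)
  rw [hbi, hRHS] at hIE
  -- relate the target to sums
  have hmeas := pi_measure_toReal_eq_sum μ k {x : Fin k → α | ∀ a ∈ S, ∃ j : Fin k, x j = a}
  have hsplit := Finset.sum_filter_add_sum_filter_not Finset.univ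
      (fun x : Fin k → α => ∀ a ∈ S, ∃ j, x j = a) W
  rw [hmeas]
  have hE : (Finset.univ.filter (· ∈ {x : Fin k → α | ∀ a ∈ S, ∃ j : Fin k, x j = a}))
      = Finset.univ.filter (fun x : Fin k → α => ∀ a ∈ S, ∃ j, x j = a) := by
    apply Finset.filter_congr; intro x _; simp
  rw [hE]
  linarith [hIE, hsplit, htot, hk]
end

section
/- Let ε ∈ (0,1) and let 0 < p̂ ≤ p ≤ 1/2. Define k := min{m ∈ ℕ : m ≥ 1 ∧ p^m + (1 − p)^m < ε} and k̂ := min{m ∈ ℕ : m ≥ 1 ∧ p̂^m + (1 − p̂)^m < ε}. Then k̂ ≥ k; that is, underestimating the assertion violation probability can only increase the number of test executions required by ProbTest. -/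
/-- Monotonicity: for `0 ≤ a ≤ b ≤ 1/2` and `m ≥ 1`,
`b^m + (1-b)^m ≤ a^m + (1-a)^m`. -/
lemma tau_anti (m : ℕ) (hm : 1 ≤ m) {a b : ℝ} (ha : 0 ≤ a) (hab : a ≤ b)
    (hb : b ≤ 1 / 2) : b ^ m + (1 - b) ^ m ≤ a ^ m + (1 - a) ^ m := by
  have key : AntitoneOn (fun x : ℝ => x ^ m + (1 - x) ^ m) (Set.Icc 0 (1/2)) := by
    refine antitoneOn_of_deriv_nonpos (f := fun x : ℝ => x ^ m + (1 - x) ^ m) (convex_Icc (0:ℝ) (1/2))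
      (by fun_prop) (by fun_prop) ?_
    intro x hx
    rw [interior_Icc] at hx
    have hx0 : (0:ℝ) < x := hx.1
    have hx1 : x < 1/2 := hx.2
    have hd : deriv (fun x : ℝ => x ^ m + (1 - x) ^ m) x
        = m * x ^ (m - 1) - m * (1 - x) ^ (m - 1) := by
      have h1 : HasDerivAt (fun x : ℝ => x ^ m) (m * x ^ (m - 1)) x :=
        hasDerivAt_pow m x
      have h2 : HasDerivAt (fun x : ℝ => (1 - x) ^ m)
          (m * (1 - x) ^ (m - 1) * (-1)) x := by
        exact (hasDerivAt_pow m (1 - x)).comp x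
          ((hasDerivAt_id x).const_sub 1)
      have := (h1.add h2).deriv
      rw [show (fun x : ℝ => x ^ m + (1 - x) ^ m) = (fun x : ℝ => x ^ m) + (fun x : ℝ => (1 - x) ^ m) from rfl, this]; ring
    rw [hd]
    have hxle : x ^ (m-1) ≤ (1 - x) ^ (m-1) :=
      pow_le_pow_left₀ hx0.le (by linarith) _
    have : (0:ℝ) ≤ (m : ℝ) := Nat.cast_nonneg m
    nlinarith
  exact key ⟨ha, hab.trans hb⟩ ⟨ha.trans hab, hb⟩ hab

/-- Underestimating the assertion violation probability (`p̂ ≤ p`) can only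
increase the number of test executions required by ProbTest: with
`k = min{m ≥ 1 : p^m + (1−p)^m < ε}` and
`k̂ = min{m ≥ 1 : p̂^m + (1−p̂)^m < ε}`, we have `k̂ ≥ k`. -/
theorem probtest_k_underestimate
    (ε : ℝ) (hε0 : 0 < ε) (hε1 : ε < 1)
    (p phat : ℝ) (hphat : 0 < phat) (hle : phat ≤ p) (hp : p ≤ 1 / 2) :
    sInf {m : ℕ | 1 ≤ m ∧ p ^ m + (1 - p) ^ m < ε} ≤
      sInf {m : ℕ | 1 ≤ m ∧ phat ^ m + (1 - phat) ^ m < ε} := by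
  have hphat2 : phat ≤ 1 / 2 := hle.trans hp
  -- the set for phat is nonempty
  set c : ℝ := 1 - phat with hc
  have hc1 : c < 1 := by simp [hc]; linarith
  have hc0 : 0 ≤ c := by simp [hc]; linarith
  have hne : ∃ m, m ∈ {m : ℕ | 1 ≤ m ∧ phat ^ m + (1 - phat) ^ m < ε} := by
    have h1 : Filter.Tendsto (fun m : ℕ => c ^ m) Filter.atTop (nhds 0) :=
      tendsto_pow_atTop_nhds_zero_of_lt_one hc0 hc1
    have h2 : ∀ᶠ m : ℕ in Filter.atTop, c ^ m < ε / 2 :=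
      (h1.eventually (gt_mem_nhds (by linarith)))
    obtain ⟨m, hm⟩ := (h2.and (Filter.eventually_ge_atTop 1)).exists
    refine ⟨m, hm.2, ?_⟩
    have hpc : phat ≤ c := by simp [hc]; linarith
    have : phat ^ m ≤ c ^ m := pow_le_pow_left₀ hphat.le hpc m
    have : phat ^ m + c ^ m < ε := by linarith [hm.1]
    simpa [hc] using this
  have hmem := Nat.sInf_mem hne
  obtain ⟨hm1, hm2⟩ := hmem
  apply Nat.sInf_le
  refine ⟨hm1, ?_⟩
  calc p ^ _ + (1 - p) ^ _ ≤ phat ^ _ + (1 - phat) ^ _ :=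
        tau_anti _ hm1 hphat.le hle hp
    _ < ε := hm2
end
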